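/- Let (B, I, f) be an affine triple (B an affine k-domain, I a nonzero ideal, 0 ≠ f ∈ I) and B' = B[f^{-1}I] the affine modification. Then B' is a principal ring extension of B (i.e., B' = B[r] for some r in frac(B)) if and only if there exist g ∈ B and n ≥ 0 such that B' = B[(f^n)^{-1} J] where J = f^n B + g B. -/

import Mathlib

/-- The affine modification `B[f⁻¹I]` of `B` along `f` with center `I`, realized as the
subalgebra of the fraction field of `B` generated by `B` and
`f⁻¹I = { x : f·x ∈ I }`. -/
noncomputable def affineModification (B : Type*) [CommRing B] [IsDomain B]
    (I : Ideal B) (f : B) : Subalgebra B (FractionRing B) :=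
  Algebra.adjoin B
    {x : FractionRing B | algebraMap B (FractionRing B) f * x ∈ algebraMap B (FractionRing B) '' (I : Set B)}

/-- Elements of `Frac B` whose denominator is a power of `f`. -/
noncomputable def denomPow (B : Type*) [CommRing B] [IsDomain B] (f : B) :
    Subalgebra B (FractionRing B) where
  carrier := {x | ∃ (n : ℕ) (g : B),
    x * algebraMap B (FractionRing B) (f ^ n) = algebraMap B (FractionRing B) g}
  mul_mem' := by
    rintro x y ⟨n, g, hn⟩ ⟨m, g', hm⟩
    refine ⟨n + m, g * g', ?_⟩
    rw [pow_add, map_mul, map_mul, ← hn, ← hm]; ring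
  add_mem' := by
    rintro x y ⟨n, g, hn⟩ ⟨m, g', hm⟩
    refine ⟨n + m, g * f ^ m + g' * f ^ n, ?_⟩
    rw [map_add, map_mul, map_mul, ← hn, ← hm, pow_add, map_mul]; ring
  one_mem' := ⟨0, 1, by simp⟩
  algebraMap_mem' := fun b => ⟨0, b, by simp⟩

lemma mod_span {B : Type*} [CommRing B] [IsDomain B] (f g : B) (hf : f ≠ 0) :
    affineModification B (Ideal.span {f, g}) f =
      Algebra.adjoin B
        {algebraMap B (FractionRing B) g / algebraMap B (FractionRing B) f} := by
  have hφ : Function.Injective (algebraMap B (FractionRing B)) :=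
    IsFractionRing.injective B (FractionRing B)
  have hf' : algebraMap B (FractionRing B) f ≠ 0 := fun h => hf (hφ (by simpa using h))
  apply le_antisymm
  · apply Algebra.adjoin_le
    rintro x ⟨c, hc, hcx⟩
    rw [SetLike.mem_coe, Ideal.mem_span_pair] at hc
    obtain ⟨a, b, rfl⟩ := hc
    have key : x = algebraMap B (FractionRing B) a +
        algebraMap B (FractionRing B) b *
          (algebraMap B (FractionRing B) g / algebraMap B (FractionRing B) f) := by
      apply mul_left_cancel₀ hf'
      rw [← hcx]
      field_simp
      simp only [map_add, map_mul]; ring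
    rw [key]
    exact add_mem (Subalgebra.algebraMap_mem _ a)
      (mul_mem (Subalgebra.algebraMap_mem _ b)
        (Algebra.subset_adjoin (Set.mem_singleton _)))
  · apply Algebra.adjoin_le
    rintro x rfl
    apply Algebra.subset_adjoin
    refine ⟨g, Ideal.subset_span (by simp), ?_⟩
    field_simp

lemma mod_le_denomPow {B : Type*} [CommRing B] [IsDomain B] (I : Ideal B) (f : B) :
    affineModification B I f ≤ denomPow B f := by
  apply Algebra.adjoin_le
  rintro x ⟨c, _, hcx⟩
  exact ⟨1, c, by rw [pow_one, mul_comm, hcx]⟩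

/-- Let `(B, I, f)` be an affine triple over a field `k` of characteristic zero and
`B' = B[f⁻¹I]` the affine modification. Then `B'` is a principal ring extension of `B`
(i.e. `B' = B[r]` for some `r ∈ frac(B)`) if and only if there exist `g ∈ B` and `n ≥ 0`
such that `B' = B[(fⁿ)⁻¹J]` where `J = fⁿB + gB`. -/
theorem principal_affine_modification {k B : Type*} [Field k] [CharZero k] [CommRing B]
    [IsDomain B] [Algebra k B] [Algebra.FiniteType k B]
    (I : Ideal B) (hI : I ≠ ⊥) (f : B) (hfI : f ∈ I) (hf : f ≠ 0) :
    (∃ r : FractionRing B, affineModification B I f = Algebra.adjoin B {r}) ↔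
    (∃ (g : B) (n : ℕ),
      affineModification B I f = affineModification B (Ideal.span {f ^ n, g}) (f ^ n)) := by
  have hφ : Function.Injective (algebraMap B (FractionRing B)) :=
    IsFractionRing.injective B (FractionRing B)
  constructor
  · rintro ⟨r, hr⟩
    have hrmem : r ∈ affineModification B I f := by
      rw [hr]; exact Algebra.subset_adjoin (Set.mem_singleton _)
    obtain ⟨n, g, hng⟩ := mod_le_denomPow I f hrmem
    have hfn : algebraMap B (FractionRing B) (f ^ n) ≠ 0 := fun h =>
      pow_ne_zero n hf (hφ (by simpa using h))
    have hreq : r = algebraMap B (FractionRing B) g / algebraMap B (FractionRing B) (f ^ n) := by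
      rw [eq_div_iff hfn]; exact hng
    refine ⟨g, n, ?_⟩
    rw [mod_span (f ^ n) g (pow_ne_zero n hf), hr, hreq]
  · rintro ⟨g, n, h⟩
    exact ⟨algebraMap B (FractionRing B) g / algebraMap B (FractionRing B) (f ^ n),
      by rw [h, mod_span (f ^ n) g (pow_ne_zero n hf)]⟩
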